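/- Let p be a prime, k a field of characteristic p, and set R = k[ε]/(ε²) with K = ker(W(R) → W(k)). Let h ≥ 2 and let B be an invertible h × h matrix over W(k), viewed over W(R), whose lower-right entry B_{hh} lies in the ideal I = v(W(R)). Then the set of h × h matrices of the form [0, b; 0, 0]·B − B·[a, v(b); c, d], where a ranges over (h−1) × (h−1) matrices, b over (h−1) × 1 matrices, c over 1 × (h−1) matrices, and d over 1 × 1 matrices with entries in K, equals the set of h × h matrices t with entries in K for which there exists λ ∈ K such that t_{ih} − λ·B_{ih} ∈ I for all 1 ≤ i ≤ h (i.e., the final column of t is congruent mod I to a multiple of the final column of B). -/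

import Mathlib

open Matrix WittVector TrivSqZeroExt

section Aux
variable (p : ℕ) [Fact p.Prime]

theorem aux_versch_injective (R : Type*) [CommRing R] :
    Function.Injective (verschiebung : WittVector p R →+ WittVector p R) := by
  intro x y h
  ext m
  have := congrArg (fun w => WittVector.coeff w (m + 1)) h
  simpa [WittVector.verschiebung_coeff_succ] using this

theorem aux_map_versch {R S : Type*} [CommRing R] [CommRing S] (f : R →+* S)
    (x : WittVector p R) :
    WittVector.map f (verschiebung x) = verschiebung (WittVector.map f x) := by
  ext m
  cases m with
  | zero => simp [WittVector.map_coeff, WittVector.verschiebung_coeff_zero]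
  | succ m => simp [WittVector.map_coeff, WittVector.verschiebung_coeff_succ]

theorem aux_mul_versch {R : Type*} [CommRing R] (x y : WittVector p R) :
    x * verschiebung y = verschiebung (y * frobenius x) := by
  rw [WittVector.verschiebung_mul_frobenius, mul_comm]

variable (k : Type) [Field k] [CharP k p]

theorem aux_frob_zero (x : WittVector p (DualNumber k))
    (hx : WittVector.map (p := p) (TrivSqZeroExt.fstHom k k k).toRingHom x = 0) :
    frobenius x = 0 := by
  haveI : CharP (DualNumber k) p := charP_of_injective_algebraMap' (A := DualNumber k) k p
  have h2 : 2 ≤ p := (Fact.out : p.Prime).two_le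
  refine WittVector.ext fun m => ?_
  rw [WittVector.coeff_frobenius_charP, WittVector.zero_coeff]
  have h1 : (x.coeff m).fst = 0 := by
    have := congrArg (fun w => WittVector.coeff w m) hx
    simpa [WittVector.map_coeff] using this
  have hsq : x.coeff m * x.coeff m = 0 := by
    have : x.coeff m = TrivSqZeroExt.inr (x.coeff m).snd := by
      ext <;> simp [h1]
    rw [this, TrivSqZeroExt.inr_mul_inr]
  calc x.coeff m ^ p = x.coeff m ^ (2 + (p - 2)) := by rw [Nat.add_sub_cancel' h2]
    _ = x.coeff m * x.coeff m * x.coeff m ^ (p - 2) := by rw [pow_add, sq]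
    _ = 0 := by rw [hsq, zero_mul]

end Aux

set_option maxHeartbeats 2000000 in
open Matrix WittVector in
theorem display_tangent_space_identification (p : ℕ) [Fact p.Prime]
    (k : Type) [Field k] [CharP k p] (n : ℕ) (hn : 1 ≤ n)
    (K : Ideal (WittVector p (DualNumber k)))
    (hK : K = RingHom.ker
      (WittVector.map (p := p) (TrivSqZeroExt.fstHom k k k).toRingHom))
    (Bk : Matrix (Fin n ⊕ Fin 1) (Fin n ⊕ Fin 1) (WittVector p k)) (hBk : IsUnit Bk)
    (B : Matrix (Fin n ⊕ Fin 1) (Fin n ⊕ Fin 1) (WittVector p (DualNumber k)))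
    (hBdef : B = Bk.map ⇑(WittVector.map (p := p) (algebraMap k (DualNumber k))))
    (hBhh : B (Sum.inr 0) (Sum.inr 0) ∈ Set.range
      ⇑(WittVector.verschiebung : WittVector p (DualNumber k) →+ WittVector p (DualNumber k))) :
    {t : Matrix (Fin n ⊕ Fin 1) (Fin n ⊕ Fin 1) (WittVector p (DualNumber k)) |
      ∃ (a : Matrix (Fin n) (Fin n) (WittVector p (DualNumber k)))
        (b : Matrix (Fin n) (Fin 1) (WittVector p (DualNumber k)))
        (c : Matrix (Fin 1) (Fin n) (WittVector p (DualNumber k)))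
        (d : Matrix (Fin 1) (Fin 1) (WittVector p (DualNumber k))),
        (∀ i j, a i j ∈ K) ∧ (∀ i j, b i j ∈ K) ∧ (∀ i j, c i j ∈ K) ∧ (∀ i j, d i j ∈ K) ∧
        t = Matrix.fromBlocks 0 b 0 0 * B -
          B * Matrix.fromBlocks a
            (b.map ⇑(WittVector.verschiebung (p := p) (R := DualNumber k))) c d} =
    {t : Matrix (Fin n ⊕ Fin 1) (Fin n ⊕ Fin 1) (WittVector p (DualNumber k)) |
      (∀ i j, t i j ∈ K) ∧
      ∃ lam ∈ K, ∀ i, t i (Sum.inr 0) - lam * B i (Sum.inr 0) ∈ Set.range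
        ⇑(WittVector.verschiebung :
          WittVector p (DualNumber k) →+ WittVector p (DualNumber k))} := by
  classical
  have hmem : ∀ x : WittVector p (DualNumber k), x ∈ K ↔
      WittVector.map (p := p) (TrivSqZeroExt.fstHom k k k).toRingHom x = 0 := by
    intro x; rw [hK]; exact Iff.rfl
  have hvK : ∀ x ∈ K, verschiebung x ∈ K := by
    intro x hx
    rw [hmem] at hx ⊢
    rw [aux_map_versch, hx, map_zero]
  have hKv0 : ∀ x ∈ K, ∀ y : WittVector p (DualNumber k), x * verschiebung y = 0 := by
    intro x hx y
    rw [aux_mul_versch, aux_frob_zero p k x ((hmem x).1 hx), mul_zero, map_zero]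
  have hvinvK : ∀ z : WittVector p (DualNumber k), verschiebung z ∈ K → z ∈ K := by
    intro z hz
    rw [hmem] at hz ⊢
    rw [aux_map_versch] at hz
    exact aux_versch_injective p k (by rw [hz, map_zero])
  have hBunit : IsUnit B := by
    rw [hBdef, ← RingHom.mapMatrix_apply]
    exact hBk.map _
  obtain ⟨U, hU⟩ := hBunit
  obtain ⟨C, hCdef⟩ : ∃ C : Matrix (Fin n ⊕ Fin 1) (Fin n ⊕ Fin 1) (WittVector p (DualNumber k)),
    C = ((U⁻¹ : (Matrix (Fin n ⊕ Fin 1) (Fin n ⊕ Fin 1) (WittVector p (DualNumber k)))ˣ) :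
      Matrix (Fin n ⊕ Fin 1) (Fin n ⊕ Fin 1) (WittVector p (DualNumber k))) := ⟨_, rfl⟩
  have hCB : C * B = 1 := by rw [hCdef, ← hU]; exact U.inv_mul
  have hBC : B * C = 1 := by rw [hCdef, ← hU]; exact U.mul_inv
  ext t
  simp only [Set.mem_setOf_eq]
  constructor
  · rintro ⟨a, b, c, d, ha, hb, hc, hd, rfl⟩
    obtain ⟨Eb, hEb⟩ :
        ∃ Eb : Matrix (Fin n ⊕ Fin 1) (Fin n ⊕ Fin 1) (WittVector p (DualNumber k)),
          Eb = Matrix.fromBlocks 0 b 0 0 := ⟨_, rfl⟩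
    rw [← hEb]
    have hE : ∀ i l, Eb i l ∈ K := by
      rintro (i | i) (l | l) <;>
        simp only [hEb, Matrix.fromBlocks_apply₁₁, Matrix.fromBlocks_apply₁₂,
          Matrix.fromBlocks_apply₂₁, Matrix.fromBlocks_apply₂₂, Matrix.zero_apply]
      exacts [K.zero_mem, hb i l, K.zero_mem, K.zero_mem]
    have hM : ∀ l j, Matrix.fromBlocks a
        (b.map ⇑(WittVector.verschiebung (p := p) (R := DualNumber k))) c d l j ∈ K := by
      rintro (l | l) (j | j) <;>
        simp only [Matrix.fromBlocks_apply₁₁, Matrix.fromBlocks_apply₁₂,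
          Matrix.fromBlocks_apply₂₁, Matrix.fromBlocks_apply₂₂, Matrix.map_apply]
      exacts [ha l j, hvK _ (hb l j), hc l j, hd l j]
    refine ⟨?_, ?_⟩
    · intro i j
      simp only [Matrix.sub_apply, Matrix.mul_apply]
      exact K.sub_mem (Ideal.sum_mem _ fun l _ => Ideal.mul_mem_right _ _ (hE i l))
        (Ideal.sum_mem _ fun l _ => Ideal.mul_mem_left _ _ (hM l j))
    · refine ⟨-(d 0 0), K.neg_mem (hd 0 0), fun i => ?_⟩
      obtain ⟨u, hu⟩ := hBhh
      refine ⟨u * frobenius (Eb i (Sum.inr 0))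
        - ∑ j : Fin n, b j 0 * frobenius (B i (Sum.inl j)), ?_⟩
      rw [map_sub, map_sum]
      have h1 : verschiebung (u * frobenius (Eb i (Sum.inr 0)))
          = Eb i (Sum.inr 0) * B (Sum.inr 0) (Sum.inr 0) := by
        rw [← aux_mul_versch, hu]
      have h2 : ∀ j : Fin n, verschiebung (b j 0 * frobenius (B i (Sum.inl j)))
          = B i (Sum.inl j) * verschiebung (b j 0) := fun j => (aux_mul_versch p _ _).symm
      rw [h1]
      simp only [h2]
      simp only [Matrix.sub_apply, Matrix.mul_apply, Fintype.sum_sum_type, Fin.sum_univ_one,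
        Matrix.fromBlocks_apply₁₂, Matrix.fromBlocks_apply₂₂, Matrix.fromBlocks_apply₁₁,
        Matrix.fromBlocks_apply₂₁, Matrix.map_apply]
      rcases i with i | i <;>
        simp only [hEb, Matrix.fromBlocks_apply₁₁, Matrix.fromBlocks_apply₁₂,
          Matrix.fromBlocks_apply₂₁, Matrix.fromBlocks_apply₂₂, Matrix.zero_apply,
          zero_mul, Finset.sum_const_zero, zero_add] <;>
        ring
  · rintro ⟨htK, lam, hlam, hcol⟩
    simp only [Set.mem_range] at hcol
    choose y hy using hcol
    have hCtK : ∀ i j, (C * t) i j ∈ K := fun i j => by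
      rw [Matrix.mul_apply]
      exact Ideal.sum_mem _ fun l _ => Ideal.mul_mem_left _ _ (htK l j)
    obtain ⟨bmat, hbmat⟩ : ∃ bmat : Matrix (Fin n) (Fin 1) (WittVector p (DualNumber k)),
      bmat = fun i _ => -(∑ j, y j * frobenius (C (Sum.inl i) j)) := ⟨_, rfl⟩
    have key : ∀ (i : Fin n) (j' : Fin 1), verschiebung (bmat i j')
        = -((C * t) (Sum.inl i) (Sum.inr 0)) := by
      intro i j'
      simp only [hbmat]
      rw [map_neg, map_sum, neg_inj]
      have h2 : ∀ j, verschiebung (y j * frobenius (C (Sum.inl i) j))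
          = C (Sum.inl i) j * verschiebung (y j) := fun j => (aux_mul_versch p _ _).symm
      simp only [h2, hy]
      have hCB0 : (C * B) (Sum.inl i) (Sum.inr 0) = 0 := by
        rw [hCB, Matrix.one_apply_ne (by simp)]
      calc ∑ j, C (Sum.inl i) j * (t j (Sum.inr 0) - lam * B j (Sum.inr 0))
          = (∑ j, C (Sum.inl i) j * t j (Sum.inr 0))
            - lam * ∑ j, C (Sum.inl i) j * B j (Sum.inr 0) := by
            rw [Finset.mul_sum, ← Finset.sum_sub_distrib]
            exact Finset.sum_congr rfl fun j _ => by ring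
        _ = (C * t) (Sum.inl i) (Sum.inr 0) - lam * (C * B) (Sum.inl i) (Sum.inr 0) := by
            rw [Matrix.mul_apply, Matrix.mul_apply]
        _ = (C * t) (Sum.inl i) (Sum.inr 0) := by rw [hCB0, mul_zero, sub_zero]
    have hbK : ∀ (i : Fin n) (j : Fin 1), bmat i j ∈ K := by
      intro i j
      refine hvinvK _ ?_
      rw [key i j]
      exact K.neg_mem (hCtK _ _)
    obtain ⟨E, hEdef⟩ :
        ∃ E : Matrix (Fin n ⊕ Fin 1) (Fin n ⊕ Fin 1) (WittVector p (DualNumber k)),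
          E = Matrix.fromBlocks 0 bmat 0 0 := ⟨_, rfl⟩
    have hEK : ∀ l m, E l m ∈ K := by
      rintro (l | l) (m | m) <;>
        simp only [hEdef, Matrix.fromBlocks_apply₁₁, Matrix.fromBlocks_apply₁₂,
          Matrix.fromBlocks_apply₂₁, Matrix.fromBlocks_apply₂₂, Matrix.zero_apply]
      exacts [K.zero_mem, hbK l m, K.zero_mem, K.zero_mem]
    obtain ⟨M, hMdef⟩ :
        ∃ M : Matrix (Fin n ⊕ Fin 1) (Fin n ⊕ Fin 1) (WittVector p (DualNumber k)),
          M = C * (E * B - t) := ⟨_, rfl⟩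
    have hEBcol : ∀ l, (E * B) l (Sum.inr 0) = 0 := by
      obtain ⟨u, hu⟩ := hBhh
      intro l
      rw [Matrix.mul_apply, Fintype.sum_sum_type]
      have hz : ∀ j : Fin n, E l (Sum.inl j) = 0 := by
        rcases l with l | l <;> simp [hEdef]
      simp only [hz, zero_mul, Finset.sum_const_zero, Fin.sum_univ_one, zero_add]
      rw [← hu]
      exact hKv0 _ (hEK l (Sum.inr 0)) u
    have hMcol : ∀ i : Fin n, M (Sum.inl i) (Sum.inr 0) = verschiebung (bmat i 0) := by
      intro i
      have hC0 : (C * (E * B)) (Sum.inl i) (Sum.inr 0) = 0 := by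
        rw [Matrix.mul_apply]
        simp [hEBcol]
      have : M (Sum.inl i) (Sum.inr 0)
          = (C * (E * B)) (Sum.inl i) (Sum.inr 0) - (C * t) (Sum.inl i) (Sum.inr 0) := by
        rw [hMdef, Matrix.mul_sub, Matrix.sub_apply]
      rw [this, hC0, zero_sub]
      exact (key i 0).symm
    have hMK : ∀ l j, M l j ∈ K := by
      intro l j
      rw [hMdef, Matrix.mul_apply]
      refine Ideal.sum_mem _ fun m _ => Ideal.mul_mem_left _ _ ?_
      rw [Matrix.sub_apply]
      refine K.sub_mem ?_ (htK m j)
      rw [Matrix.mul_apply]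
      exact Ideal.sum_mem _ fun r _ => Ideal.mul_mem_right _ _ (hEK m r)
    refine ⟨fun i j => M (Sum.inl i) (Sum.inl j), bmat,
      fun _ j => M (Sum.inr 0) (Sum.inl j), fun _ _ => M (Sum.inr 0) (Sum.inr 0),
      fun i j => hMK _ _, hbK, fun i j => hMK _ _, fun i j => hMK _ _, ?_⟩
    have hblocks : Matrix.fromBlocks (fun i j => M (Sum.inl i) (Sum.inl j))
        (bmat.map ⇑(WittVector.verschiebung (p := p) (R := DualNumber k)))
        (fun _ j => M (Sum.inr 0) (Sum.inl j)) (fun _ _ => M (Sum.inr 0) (Sum.inr 0)) = M := by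
      refine Matrix.ext fun l m => ?_
      rcases l with l | l <;> rcases m with m | m
      · rfl
      · obtain rfl : m = 0 := Subsingleton.elim m 0
        show WittVector.verschiebung (bmat l 0) = _
        exact (hMcol l).symm
      · obtain rfl : l = 0 := Subsingleton.elim l 0
        rfl
      · obtain rfl : l = 0 := Subsingleton.elim l 0
        obtain rfl : m = 0 := Subsingleton.elim m 0
        rfl
    rw [hblocks, hMdef, ← hEdef, ← Matrix.mul_assoc, hBC, Matrix.one_mul]
    exact (sub_sub_cancel _ _).symm
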